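/- Let 𝒳 be a set, m ≥ 0, and for i ∈ {1, …, m+1} let kⁱ : 𝒳 × 𝒳 → ℝ be positive-definite kernels (all Gram matrices symmetric positive semidefinite); set Λ(x, x') = diag(k¹(x,x'), …, k^{m+1}(x,x')). Let (x₁, y₁), …, (x_N, y_N) ∈ 𝒳 × ℝ^{m+1}, let K be the N×N matrix with K_{ab} = y_aᵀ Λ(x_a, x_b) y_b, let x* ∈ 𝒳, let K̄ ∈ ℝ^{(m+1)×N} be the matrix whose b-th column is Λ(x*, x_b) y_b, and let σ > 0. Then the matrix Σ(x*) = Λ(x*, x*) − K̄ (K + σ² I)⁻¹ K̄ᵀ is symmetric positive semidefinite. -/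

import Mathlib

open Matrix

private lemma gram_psd {X : Type*} {ι : Type*} [Fintype ι] (κ : X → X → ℝ)
    (hκ : ∀ (M : ℕ) (z : Fin M → X),
      (Matrix.of fun a b => κ (z a) (z b)).PosSemidef)
    (z : ι → X) : (Matrix.of fun a b => κ (z a) (z b)).PosSemidef := by
  classical
  let e := Fintype.equivFin ι
  have h := (hκ (Fintype.card ι) (z ∘ e.symm)).submatrix e
  convert h using 2
  ext a b
  simp [Matrix.submatrix_apply]

private lemma sum_psd {n : Type*} [Fintype n] {ι : Type*} (s : Finset ι)
    (f : ι → Matrix n n ℝ) (hf : ∀ i ∈ s, (f i).PosSemidef) :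
    (∑ i ∈ s, f i).PosSemidef := by
  classical
  induction s using Finset.induction_on with
  | empty => simpa using Matrix.PosSemidef.zero
  | insert _ _ hni ih =>
    rename_i a s
    rw [Finset.sum_insert hni]
    exact (hf a (Finset.mem_insert_self a s)).add
      (ih fun i hi => hf i (Finset.mem_insert_of_mem hi))

/-- The Gaussian-process posterior covariance matrix
`Σ(x*) = Λ(x*, x*) − K̄ (K + σ² I)⁻¹ K̄ᵀ` of eq. (15) of the paper is symmetric positive
semidefinite, where `K_{ab} = y_aᵀ Λ(x_a, x_b) y_b` is the Gram matrix of the structured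
kernel, the `b`-th column of `K̄` is `Λ(x*, x_b) y_b`, the base kernels `k i` are
positive-definite kernels, and `σ > 0`. -/
theorem gp_posterior_cov_psd {X : Type*} (m N : ℕ)
    (k : Fin (m + 1) → X → X → ℝ)
    (hk : ∀ (i : Fin (m + 1)) (M : ℕ) (z : Fin M → X),
      (Matrix.of fun a b => k i (z a) (z b)).PosSemidef)
    (x : Fin N → X) (y : Fin N → (Fin (m + 1) → ℝ)) (xs : X)
    (σ : ℝ) (hσ : 0 < σ)
    (K : Matrix (Fin N) (Fin N) ℝ)
    (hK : K = Matrix.of fun a b =>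
      y a ⬝ᵥ (Matrix.diagonal fun i => k i (x a) (x b)) *ᵥ y b)
    (Kbar : Matrix (Fin (m + 1)) (Fin N) ℝ)
    (hKbar : Kbar = Matrix.of fun i b =>
      ((Matrix.diagonal fun j => k j xs (x b)) *ᵥ y b) i) :
    ((Matrix.diagonal fun i => k i xs xs)
      - Kbar * (K + σ ^ 2 • (1 : Matrix (Fin N) (Fin N) ℝ))⁻¹ * Kbarᵀ).PosSemidef := by
  classical
  set ι := Fin (m + 1) ⊕ Fin N
  set z : ι → X := Sum.elim (fun _ => xs) x with hz
  set c : Fin (m + 1) → ι → ℝ :=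
    fun i => Sum.elim (fun j => if j = i then 1 else 0) (fun b => y b i) with hc
  -- the big Gram matrix
  set G : Matrix ι ι ℝ :=
    ∑ i : Fin (m + 1),
      Matrix.diagonal (c i) * (Matrix.of fun a b => k i (z a) (z b))
        * (Matrix.diagonal (c i))ᴴ with hG
  have hGpsd : G.PosSemidef := by
    refine sum_psd _ _ fun i _ => ?_
    exact (gram_psd (k i) (hk i) z).mul_mul_conjTranspose_same _
  -- identify G with the block matrix
  have hGeq : G = Matrix.fromBlocks (Matrix.diagonal fun i => k i xs xs) Kbar Kbarᵀ K := by
    ext a b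
    have hent : ∀ (i : Fin (m + 1)) a b,
        (Matrix.diagonal (c i) * (Matrix.of fun a b => k i (z a) (z b))
          * (Matrix.diagonal (c i))ᴴ) a b = c i a * k i (z a) (z b) * c i b := by
      intro i a b
      rw [Matrix.conjTranspose_eq_transpose_of_trivial, Matrix.diagonal_transpose,
        Matrix.mul_diagonal, Matrix.diagonal_mul]
      rfl
    have hGab : G a b = ∑ i : Fin (m + 1), c i a * k i (z a) (z b) * c i b := by
      rw [hG, Matrix.sum_apply]
      exact Finset.sum_congr rfl fun i _ => hent i a b
    rcases a with j | p <;> rcases b with j' | q <;>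
      simp only [hGab, hz, hc, Sum.elim_inl, Sum.elim_inr, Matrix.fromBlocks_apply₁₁,
        Matrix.fromBlocks_apply₁₂, Matrix.fromBlocks_apply₂₁, Matrix.fromBlocks_apply₂₂,
        hK, hKbar, Matrix.of_apply, Matrix.transpose_apply, Matrix.mulVec_diagonal,
        Matrix.dotProduct_mulVec, dotProduct]
    · simp only [ite_mul, one_mul, zero_mul, mul_ite, mul_one, mul_zero,
        Finset.sum_ite_eq, Finset.sum_ite_eq', Finset.mem_univ, if_true,
        Matrix.diagonal_apply]
      by_cases h : j = j' <;> simp [h, eq_comm]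
    · simp only [ite_mul, one_mul, zero_mul, mul_ite, mul_one, mul_zero,
        Finset.sum_ite_eq, Finset.sum_ite_eq', Finset.mem_univ, if_true]
    · simp only [ite_mul, one_mul, zero_mul, mul_ite, mul_one, mul_zero,
        Finset.sum_ite_eq, Finset.sum_ite_eq', Finset.mem_univ, if_true]
      have hsym : k j' (x p) xs = k j' xs (x p) := by
        have h01 := congrFun (congrFun (hk j' 2 ![xs, x p]).isHermitian 1) 0
        simpa [Matrix.conjTranspose_apply] using h01.symm
      rw [hsym]; ring
    · exact Finset.sum_congr rfl fun i _ => by ring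
  -- K is PSD, so K + σ²I is positive definite
  have hKpsd : K.PosSemidef := by
    have := hGpsd.submatrix (Sum.inr : Fin N → ι)
    rw [hGeq] at this
    exact this
  have hDpd : (K + σ ^ 2 • (1 : Matrix (Fin N) (Fin N) ℝ)).PosDef := by
    refine Matrix.PosDef.posSemidef_add hKpsd ?_
    rw [Matrix.smul_one_eq_diagonal]
    exact Matrix.posDef_diagonal_iff.mpr fun _ => by positivity
  have : Invertible (K + σ ^ 2 • (1 : Matrix (Fin N) (Fin N) ℝ)) :=
    Matrix.invertibleOfIsUnitDet _ hDpd.det_pos.ne'.isUnit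
  -- block matrix with regularized lower-right block is PSD
  have hblock : (Matrix.fromBlocks (Matrix.diagonal fun i => k i xs xs) Kbar Kbarᴴ
      (K + σ ^ 2 • (1 : Matrix (Fin N) (Fin N) ℝ))).PosSemidef := by
    have h2 : (Matrix.diagonal
        (Sum.elim (fun _ : Fin (m+1) => (0:ℝ)) (fun _ : Fin N => σ ^ 2))).PosSemidef :=
      Matrix.posSemidef_diagonal_iff.mpr (by rintro (a | a) <;> simp <;> positivity)
    have := hGpsd.add h2
    rw [hGeq, ← Matrix.fromBlocks_diagonal, Matrix.fromBlocks_add] at this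
    convert this using 2 <;>
      simp [Matrix.conjTranspose_eq_transpose_of_trivial, Matrix.diagonal_zero,
        Matrix.smul_one_eq_diagonal]
  rw [Matrix.conjTranspose_eq_transpose_of_trivial] at hblock
  have := (Matrix.PosDef.fromBlocks₂₂ (Matrix.diagonal fun i => k i xs xs) Kbar hDpd).mp
  rw [Matrix.conjTranspose_eq_transpose_of_trivial] at this
  exact this hblock
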